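/- Let $G$ be a group and $U, V, W \le G$ subgroups, where $W$ contains an element $w$ of infinite order such that the cyclic subgroup $\langle w \rangle$ has finite index in $W$. If $U \cap W$ is infinite and $W \cap V$ is infinite, then $U \cap V$ is infinite. -/

import Mathlib

/-- If a set of the form `X ∩ W` is infinite, where `X` is a subgroup and `⟨w⟩` has
finite index in `W`, then some nontrivial power of `w` lies in `X`. -/
lemma exists_zpow_mem_of_inter_infinite {G : Type*} [Group G] (X W : Subgroup G)
    (w : G)
    (hfi : ((Subgroup.zpowers w).subgroupOf W).FiniteIndex)
    (h : ((X : Set G) ∩ (W : Set G)).Infinite) :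
    ∃ n : ℤ, n ≠ 0 ∧ w ^ n ∈ X := by
  haveI : Infinite ((X : Set G) ∩ (W : Set G) : Set G) := h.to_subtype
  haveI : Finite (W ⧸ (Subgroup.zpowers w).subgroupOf W) :=
    Subgroup.finite_quotient_of_finiteIndex
  have hni : ¬ Function.Injective
      (fun x : ((X : Set G) ∩ (W : Set G) : Set G) =>
        (QuotientGroup.mk (⟨x.1, x.2.2⟩ : W) : W ⧸ (Subgroup.zpowers w).subgroupOf W)) :=
    not_injective_infinite_finite _
  rw [Function.not_injective_iff] at hni
  obtain ⟨a, b, hab, hne⟩ := hni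
  rw [QuotientGroup.eq] at hab
  have hmem : (a.1)⁻¹ * b.1 ∈ Subgroup.zpowers w := hab
  obtain ⟨n, hn⟩ := hmem
  simp only [] at hn
  refine ⟨n, ?_, ?_⟩
  · rintro rfl
    simp only [zpow_zero] at hn
    apply hne
    apply Subtype.ext
    have : a.1 = b.1 := by
      have := hn.symm
      rwa [inv_mul_eq_one] at this
    exact this
  · rw [show w ^ n = (a.1)⁻¹ * b.1 from hn]
    exact mul_mem (inv_mem a.2.1) b.2.1

theorem inter_infinite_trans {G : Type*} [Group G] (U V W : Subgroup G)
    (w : G) (hw : w ∈ W) (hford : ¬ IsOfFinOrder w)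
    (hfi : ((Subgroup.zpowers w).subgroupOf W).FiniteIndex)
    (hUW : ((U : Set G) ∩ (W : Set G)).Infinite)
    (hWV : ((W : Set G) ∩ (V : Set G)).Infinite) :
    ((U : Set G) ∩ (V : Set G)).Infinite := by
  obtain ⟨n, hn0, hnU⟩ := exists_zpow_mem_of_inter_infinite U W w hfi hUW
  obtain ⟨m, hm0, hmV⟩ := exists_zpow_mem_of_inter_infinite V W w hfi
    (by rwa [Set.inter_comm] at hWV)
  have hinj : Function.Injective (fun k : ℤ => w ^ (n * m * k)) := by
    intro k₁ k₂ hk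
    have hz : Function.Injective (w ^ · : ℤ → G) :=
      injective_zpow_iff_not_isOfFinOrder.mpr hford
    have := hz hk
    exact mul_left_cancel₀ (mul_ne_zero hn0 hm0) this
  apply Set.infinite_of_injective_forall_mem hinj
  intro k
  constructor
  · have : w ^ (n * m * k) = (w ^ n) ^ (m * k) := by
      rw [← zpow_mul, mul_assoc]
    rw [this]
    exact Subgroup.zpow_mem U hnU _
  · have : w ^ (n * m * k) = (w ^ m) ^ (n * k) := by
      rw [← zpow_mul]; ring_nf
    rw [this]
    exact Subgroup.zpow_mem V hmV _
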